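/- Let A, B, C be positive invertible bounded operators on a complex Hilbert space and α ∈ (0,1). Then C ≤ ((1−α)A⁻¹ + αB⁻¹)⁻¹ if and only if the 2×2 operator block matrix [[αA − α(1−α)C, α(1−α)C], [α(1−α)C, (1−α)B − α(1−α)C]] is a positive operator on H ⊕ H. -/

import Mathlib

set_option linter.unusedSectionVars false

section Helpers
variable {H : Type*} [NormedAddCommGroup H] [InnerProductSpace ℂ H] [CompleteSpace H]

private lemma re_smul_left' (r : ℝ) (u v : H) :
    (inner ℂ (r • u) v : ℂ).re = r * (inner ℂ u v : ℂ).re := by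
  rw [RCLike.real_smul_eq_coe_smul (K := ℂ), inner_smul_left]; simp

private lemma re_smul_right' (r : ℝ) (u v : H) :
    (inner ℂ u (r • v) : ℂ).re = r * (inner ℂ u v : ℂ).re := by
  rw [RCLike.real_smul_eq_coe_smul (K := ℂ), inner_smul_right]; simp

private lemma re_symm' (u v : H) : (inner ℂ u v : ℂ).re = (inner ℂ v u : ℂ).re := by
  rw [← inner_conj_symm, Complex.conj_re]

private lemma re_sa' (T : H →L[ℂ] H) (hT : IsSelfAdjoint T) (u v : H) :
    (inner ℂ (T u) v : ℂ).re = (inner ℂ (T v) u : ℂ).re := by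
  nth_rewrite 1 [← hT.adjoint_eq]
  rw [ContinuousLinearMap.adjoint_inner_left]
  exact re_symm' _ _

private lemma inner_re_nonneg_of_nonneg {T : H →L[ℂ] H} (hT : 0 ≤ T) (x : H) :
    0 ≤ (inner ℂ (T x) x : ℂ).re := by
  have hP := (ContinuousLinearMap.nonneg_iff_isPositive T).mp hT
  exact hP.2 x

private lemma inverse_nonneg {A : H →L[ℂ] H} (hA : IsSelfAdjoint A) (hApos : 0 ≤ A)
    (hAinv : IsUnit A) : 0 ≤ Ring.inverse A := by
  have h1 : IsSelfAdjoint (Ring.inverse A) := by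
    rw [IsSelfAdjoint, ← Ring.inverse_star, hA.star_eq]
  rw [ContinuousLinearMap.nonneg_iff_isPositive]
  refine ⟨h1.isSymmetric, fun x => ?_⟩
  have hx : A (Ring.inverse A x) = x := by
    have h := Ring.mul_inverse_cancel A hAinv
    calc A (Ring.inverse A x) = (A * Ring.inverse A) x := rfl
      _ = x := by rw [h]; rfl
  rw [ContinuousLinearMap.reApplyInnerSelf]
  have h2 : (inner ℂ (Ring.inverse A x) x : ℂ) = inner ℂ (Ring.inverse A x) (A (Ring.inverse A x)) := by
    rw [hx]
  rw [h2, inner_re_symm]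
  simpa using inner_re_nonneg_of_nonneg hApos _

private lemma inverse_sa {A : H →L[ℂ] H} (hA : IsSelfAdjoint A) :
    IsSelfAdjoint (Ring.inverse A) := by
  rw [IsSelfAdjoint, ← Ring.inverse_star, hA.star_eq]

private lemma opSmul_nonneg {T : H →L[ℂ] H} (hTsa : IsSelfAdjoint T) (hT : 0 ≤ T) {r : ℝ}
    (hr : 0 ≤ r) : 0 ≤ r • T := by
  rw [ContinuousLinearMap.nonneg_iff_isPositive]
  have hsa : IsSelfAdjoint (r • T) := by
    rw [IsSelfAdjoint, star_smul, star_trivial, hTsa.star_eq]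
  refine ⟨hsa.isSymmetric, fun x => ?_⟩
  rw [ContinuousLinearMap.reApplyInnerSelf, ContinuousLinearMap.smul_apply]
  simp only [RCLike.re_to_complex]
  rw [re_smul_left']
  exact mul_nonneg hr (inner_re_nonneg_of_nonneg hT x)

end Helpers

theorem le_weighted_harmonic_iff_block_positive
    {H : Type*} [NormedAddCommGroup H] [InnerProductSpace ℂ H] [CompleteSpace H]
    (A B C : H →L[ℂ] H) (hA : IsSelfAdjoint A) (hB : IsSelfAdjoint B) (hC : IsSelfAdjoint C)
    (hApos : 0 ≤ A) (hBpos : 0 ≤ B) (hCpos : 0 ≤ C)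
    (hAinv : IsUnit A) (hBinv : IsUnit B) (hCinv : IsUnit C)
    (α : ℝ) (hα0 : 0 < α) (hα1 : α < 1) :
    C ≤ Ring.inverse ((1 - α) • Ring.inverse A + α • Ring.inverse B) ↔
    ∀ x y : H, α * (1 - α) * (inner ℂ (C (x - y)) (x - y) : ℂ).re ≤
      α * (inner ℂ (A x) x : ℂ).re + (1 - α) * (inner ℂ (B y) y : ℂ).re := by
  have hα1' : (0:ℝ) < 1 - α := by linarith
  set A' := Ring.inverse A with hA'def
  set B' := Ring.inverse B with hB'def
  set S := (1 - α) • A' + α • B' with hSdef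
  set E := Ring.inverse S with hEdef
  have hA'sa : IsSelfAdjoint A' := inverse_sa hA
  have hB'sa : IsSelfAdjoint B' := inverse_sa hB
  have hA'pos : 0 ≤ A' := inverse_nonneg hA hApos hAinv
  have hB'pos : 0 ≤ B' := inverse_nonneg hB hBpos hBinv
  have hSsa : IsSelfAdjoint S := by
    rw [IsSelfAdjoint, hSdef]
    simp only [star_add, star_smul, star_trivial, hA'sa.star_eq, hB'sa.star_eq]
  have hA'u : IsUnit A' := by
    rw [hA'def, ← hAinv.unit_spec, Ring.inverse_unit]
    exact (hAinv.unit⁻¹).isUnit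
  have hsmulA'u : IsUnit ((1 - α) • A') := by
    rw [isUnit_iff_exists]
    refine ⟨((1 - α)⁻¹ : ℝ) • A, ?_, ?_⟩
    · rw [smul_mul_smul_comm, Ring.inverse_mul_cancel A hAinv,
        mul_inv_cancel₀ (ne_of_gt hα1'), one_smul]
    · rw [smul_mul_smul_comm, Ring.mul_inverse_cancel A hAinv,
        inv_mul_cancel₀ (ne_of_gt hα1'), one_smul]
  have hSu : IsUnit S :=
    CStarAlgebra.isUnit_of_le _
      (le_add_of_nonneg_right (opSmul_nonneg hB'sa hB'pos hα0.le)) ⟨opSmul_nonneg hA'sa hA'pos hα1'.le, hsmulA'u⟩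
  have hEsa : IsSelfAdjoint E := inverse_sa hSsa
  have hSpos : 0 ≤ S :=
    (opSmul_nonneg hA'sa hA'pos hα1'.le).trans
      (le_add_of_nonneg_right (opSmul_nonneg hB'sa hB'pos hα0.le))
  have hEpos : 0 ≤ E := inverse_nonneg hSsa hSpos hSu
  -- application facts
  have hAA' : ∀ v : H, A (A' v) = v := fun v => by
    have h := Ring.mul_inverse_cancel A hAinv
    calc A (A' v) = (A * A') v := rfl
      _ = v := by rw [h]; rfl
  have hBB' : ∀ v : H, B (B' v) = v := fun v => by
    have h := Ring.mul_inverse_cancel B hBinv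
    calc B (B' v) = (B * B') v := rfl
      _ = v := by rw [h]; rfl
  have hSE : ∀ z : H, S (E z) = z := fun z => by
    have h := Ring.mul_inverse_cancel S hSu
    calc S (E z) = (S * E) z := rfl
      _ = z := by rw [h]; rfl
  have hSapp : ∀ v : H, S v = (1 - α) • A' v + α • B' v := fun v => rfl
  -- key quantities for a given z
  have key : ∀ z : H,
      let w := E z
      let x₀ := (1 - α) • A' w
      let y₀ := (-α) • B' w
      x₀ - y₀ = z ∧ A x₀ = (1 - α) • w ∧ B y₀ = (-α) • w ∧
      (1 - α) * (inner ℂ (E z) (A' (E z)) : ℂ).re + α * (inner ℂ (E z) (B' (E z)) : ℂ).re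
        = (inner ℂ (E z) z : ℂ).re := by
    intro z
    refine ⟨?_, ?_, ?_, ?_⟩
    · show (1 - α) • A' (E z) - (-α) • B' (E z) = z
      rw [neg_smul, sub_neg_eq_add, ← hSapp, hSE]
    · show A ((1 - α) • A' (E z)) = (1 - α) • E z
      rw [A.map_smul_of_tower, hAA']
    · show B ((-α) • B' (E z)) = (-α) • E z
      rw [B.map_smul_of_tower, hBB']
    · have : (inner ℂ (E z) z : ℂ).re = (inner ℂ (E z) (S (E z)) : ℂ).re := by rw [hSE]
      rw [this, hSapp, inner_add_right, Complex.add_re, re_smul_right', re_smul_right']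
  constructor
  · -- forward direction
    intro hle x y
    set z := x - y with hz
    obtain ⟨hxy, hAx₀, hBy₀, hsum⟩ := key z
    set w := E z with hw
    set x₀ := (1 - α) • A' w with hx₀
    set y₀ := (-α) • B' w with hy₀
    -- h1 : re⟪Cz,z⟫ ≤ re⟪Ez,z⟫
    have h1 : (inner ℂ (C z) z : ℂ).re ≤ (inner ℂ (E z) z : ℂ).re := by
      rw [ContinuousLinearMap.le_def] at hle
      have h0 : 0 ≤ (inner ℂ ((E - C) z) z).re := hle.2 z
      simp only [ContinuousLinearMap.sub_apply, inner_sub_left, map_sub,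
        RCLike.re_to_complex, Complex.sub_re] at h0
      linarith
    -- h2, h3 : squares
    have h2 : 0 ≤ (inner ℂ (A (x - x₀)) (x - x₀) : ℂ).re := inner_re_nonneg_of_nonneg hApos _
    have h3 : 0 ≤ (inner ℂ (B (y - y₀)) (y - y₀) : ℂ).re := inner_re_nonneg_of_nonneg hBpos _
    -- expansions
    have e2 : (inner ℂ (A (x - x₀)) (x - x₀) : ℂ).re
        = (inner ℂ (A x) x : ℂ).re - 2 * (1 - α) * (inner ℂ x w : ℂ).re
          + (1 - α) ^ 2 * (inner ℂ w (A' w) : ℂ).re := by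
      rw [map_sub, inner_sub_left, inner_sub_right, inner_sub_right,
        Complex.sub_re, Complex.sub_re, Complex.sub_re]
      rw [hAx₀]
      rw [re_smul_left', re_smul_left']
      have hax : (inner ℂ (A x) x₀ : ℂ).re = (1 - α) * (inner ℂ x w : ℂ).re := by
        rw [re_sa' A hA, hAx₀, re_smul_left', re_symm']
      rw [hax]
      have hwx : (inner ℂ w x : ℂ).re = (inner ℂ x w : ℂ).re := re_symm' _ _
      have hwx₀ : (inner ℂ w x₀ : ℂ).re = (1 - α) * (inner ℂ w (A' w) : ℂ).re := by
        rw [hx₀, re_smul_right']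
      rw [hwx, hwx₀]
      ring
    have e3 : (inner ℂ (B (y - y₀)) (y - y₀) : ℂ).re
        = (inner ℂ (B y) y : ℂ).re + 2 * α * (inner ℂ y w : ℂ).re
          + α ^ 2 * (inner ℂ w (B' w) : ℂ).re := by
      rw [map_sub, inner_sub_left, inner_sub_right, inner_sub_right,
        Complex.sub_re, Complex.sub_re, Complex.sub_re]
      rw [hBy₀]
      rw [re_smul_left', re_smul_left']
      have hby : (inner ℂ (B y) y₀ : ℂ).re = (-α) * (inner ℂ y w : ℂ).re := by
        rw [re_sa' B hB, hBy₀, re_smul_left', re_symm']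
      rw [hby]
      have hwy : (inner ℂ w y : ℂ).re = (inner ℂ y w : ℂ).re := re_symm' _ _
      have hwy₀ : (inner ℂ w y₀ : ℂ).re = (-α) * (inner ℂ w (B' w) : ℂ).re := by
        rw [hy₀, re_smul_right']
      rw [hwy, hwy₀]
      ring
    -- re⟪x - y, w⟫ = re⟪Ez, z⟫
    have exyw : (inner ℂ x w : ℂ).re - (inner ℂ y w : ℂ).re = (inner ℂ (E z) z : ℂ).re := by
      have : (inner ℂ z w : ℂ).re = (inner ℂ x w : ℂ).re - (inner ℂ y w : ℂ).re := by
        rw [hz, inner_sub_left, Complex.sub_re]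
      rw [← this, re_symm']
    nlinarith [mul_pos hα0 hα1', mul_nonneg hα0.le h2, mul_nonneg hα1'.le h3,
      mul_le_mul_of_nonneg_left h1 (mul_pos hα0 hα1').le]
  · -- reverse direction
    intro h
    rw [ContinuousLinearMap.le_def]
    refine ⟨(hEsa.sub hC).isSymmetric, fun z => ?_⟩
    obtain ⟨hxy, hAx₀, hBy₀, hsum⟩ := key z
    set w := E z with hw
    set x₀ := (1 - α) • A' w with hx₀
    set y₀ := (-α) • B' w with hy₀
    have hz := h x₀ y₀
    rw [hxy] at hz
    have eA : (inner ℂ (A x₀) x₀ : ℂ).re = (1 - α) ^ 2 * (inner ℂ w (A' w) : ℂ).re := by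
      rw [hAx₀, re_smul_left', hx₀, re_smul_right']; ring
    have eB : (inner ℂ (B y₀) y₀ : ℂ).re = α ^ 2 * (inner ℂ w (B' w) : ℂ).re := by
      rw [hBy₀, re_smul_left', hy₀, re_smul_right']; ring
    rw [eA, eB] at hz
    rw [ContinuousLinearMap.reApplyInnerSelf]
    simp only [ContinuousLinearMap.sub_apply, inner_sub_left, map_sub, RCLike.re_to_complex]
    have hpos := mul_pos hα0 hα1'
    nlinarith [hsum, hz, hpos]
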